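/- Let G be a simple graph on n vertices with Sombor eigenvalues ρ_1,...,ρ_n, Sombor Estrada index EE(G) = Σ_i e^{ρ_i}, and forgotten index F. Then EE(G) ≤ n − 1 + tr(S³)/6 + tr(S⁴)/24 + e^{√(2F)} − √(2F) − (1/3)F√(2F) − (1/6)F², with equality if and only if G has no edges. -/
import Mathlib

open scoped Classical

noncomputable def somborMatrix {V : Type*} [Fintype V] (G : SimpleGraph V) :
    Matrix V V ℝ := fun i j =>
  if G.Adj i j then Real.sqrt ((G.degree i : ℝ) ^ 2 + (G.degree j : ℝ) ^ 2) else 0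

lemma somborMatrix_isHermitian {V : Type*} [Fintype V] (G : SimpleGraph V) :
    (somborMatrix G).IsHermitian := by
  apply Matrix.ext
  intro i j
  simp only [Matrix.conjTranspose_apply, star_trivial, somborMatrix]
  rw [G.adj_comm, add_comm]

/-- The Sombor eigenvalues of `G`. -/
noncomputable def somborEigs {V : Type*} [Fintype V] (G : SimpleGraph V) : V → ℝ :=
  (somborMatrix_isHermitian G).eigenvalues

/-- The Sombor spectral radius (largest Sombor eigenvalue). -/
noncomputable def somborSpecRad {V : Type*} [Fintype V] (G : SimpleGraph V) : ℝ :=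
  ⨆ i, somborEigs G i

/-- The Sombor energy. -/
noncomputable def somborEnergy {V : Type*} [Fintype V] (G : SimpleGraph V) : ℝ :=
  ∑ i, |somborEigs G i|

/-- The Sombor Estrada index. -/
noncomputable def somborEstrada {V : Type*} [Fintype V] (G : SimpleGraph V) : ℝ :=
  ∑ i, Real.exp (somborEigs G i)

/-- The forgotten topological index `F = ∑ d_i ^ 3`. -/
noncomputable def forgottenIndex {V : Type*} [Fintype V] (G : SimpleGraph V) : ℝ :=
  ∑ i, (G.degree i : ℝ) ^ 3

/- ### Auxiliary lemmas -/

lemma my_exp_tsum (x : ℝ) : Real.exp x = ∑' n : ℕ, x ^ n / n.factorial := by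
  rw [Real.exp_eq_exp_ℝ, NormedSpace.exp_eq_tsum_div]

lemma myConjPow {m : Type*} [Fintype m] [DecidableEq m] (U D : Matrix m m ℝ)
    (hU : star U * U = 1) (hU' : U * star U = 1) (k : ℕ) :
    (U * D * star U) ^ k = U * D ^ k * star U := by
  induction k with
  | zero => simp [hU']
  | succ j ih =>
    rw [pow_succ, ih, pow_succ]
    calc U * D ^ j * star U * (U * D * star U) = U * D ^ j * (star U * U) * D * star U := by
          simp only [Matrix.mul_assoc]
      _ = U * (D ^ j * D) * star U := by rw [hU]; simp only [Matrix.mul_one, Matrix.mul_assoc]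

lemma trace_pow_eq_sum {n : ℕ} (A : Matrix (Fin n) (Fin n) ℝ) (hA : A.IsHermitian) (k : ℕ) :
    (A ^ k).trace = ∑ i, hA.eigenvalues i ^ k := by
  have hU : star (hA.eigenvectorUnitary : Matrix (Fin n) (Fin n) ℝ) * hA.eigenvectorUnitary = 1 :=
    (Matrix.mem_unitaryGroup_iff').mp hA.eigenvectorUnitary.2
  have hU' : (hA.eigenvectorUnitary : Matrix (Fin n) (Fin n) ℝ) *
      star (hA.eigenvectorUnitary : Matrix (Fin n) (Fin n) ℝ) = 1 :=
    (Matrix.mem_unitaryGroup_iff).mp hA.eigenvectorUnitary.2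
  have hD : A = hA.eigenvectorUnitary * Matrix.diagonal hA.eigenvalues *
      star (hA.eigenvectorUnitary : Matrix (Fin n) (Fin n) ℝ) := by
    have := hA.spectral_theorem
    simpa using this
  calc (A ^ k).trace
      = ((hA.eigenvectorUnitary * Matrix.diagonal hA.eigenvalues *
          star (hA.eigenvectorUnitary : Matrix (Fin n) (Fin n) ℝ)) ^ k).trace := by rw [← hD]
    _ = ∑ i, hA.eigenvalues i ^ k := by
        rw [myConjPow _ _ hU hU', Matrix.trace_mul_cycle, hU, Matrix.one_mul,
          Matrix.diagonal_pow, Matrix.trace_diagonal]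
        simp

lemma sombor_trace_zero {n : ℕ} (G : SimpleGraph (Fin n)) : (somborMatrix G).trace = 0 := by
  simp [Matrix.trace, Matrix.diag, somborMatrix]

lemma sombor_trace_sq {n : ℕ} (G : SimpleGraph (Fin n)) :
    (somborMatrix G ^ 2).trace = 2 * forgottenIndex G := by
  have hsq : ∀ i j : Fin n, somborMatrix G i j * somborMatrix G j i =
      if G.Adj i j then (G.degree i : ℝ) ^ 2 + (G.degree j : ℝ) ^ 2 else 0 := by
    intro i j
    simp only [somborMatrix]
    by_cases h : G.Adj i j
    · rw [if_pos h, if_pos (G.adj_comm i j |>.mp h), if_pos h, add_comm ((G.degree j : ℝ)^2)]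
      exact Real.mul_self_sqrt (by positivity)
    · rw [if_neg h, if_neg (fun h' => h ((G.adj_comm i j).mpr h')), if_neg h, zero_mul]
  have hdeg : ∀ i : Fin n, ∀ c : ℝ, (∑ j, if G.Adj i j then c else 0) = (G.degree i : ℝ) * c := by
    intro i c
    rw [Finset.sum_ite, Finset.sum_const, Finset.sum_const_zero, add_zero,
      show Finset.univ.filter (fun x => G.Adj i x) = G.neighborFinset i by ext x; simp,
      G.card_neighborFinset_eq_degree i, nsmul_eq_mul]
  rw [pow_two]
  rw [Matrix.trace]
  simp only [Matrix.diag_apply, Matrix.mul_apply, hsq]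
  have h1 : ∀ i : Fin n, (∑ j, if G.Adj i j then (G.degree i : ℝ)^2 + (G.degree j : ℝ)^2 else 0)
      = (∑ j, if G.Adj i j then (G.degree i : ℝ)^2 else 0)
        + ∑ j, if G.Adj i j then (G.degree j : ℝ)^2 else 0 := by
    intro i
    rw [← Finset.sum_add_distrib]
    congr 1; ext j; by_cases h : G.Adj i j <;> simp [h]
  simp only [h1, Finset.sum_add_distrib, hdeg]
  have h2 : (∑ i : Fin n, ∑ j : Fin n, if G.Adj i j then (G.degree j : ℝ)^2 else 0)
      = ∑ i : Fin n, (G.degree i : ℝ)^3 := by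
    rw [Finset.sum_comm]
    refine Finset.sum_congr rfl fun j _ => ?_
    have : (∑ i : Fin n, if G.Adj i j then (G.degree j : ℝ)^2 else 0)
        = ∑ i : Fin n, if G.Adj j i then (G.degree j : ℝ)^2 else 0 := by
      refine Finset.sum_congr rfl fun i _ => ?_
      rw [G.adj_comm]
    rw [this, hdeg, ← pow_succ']
  rw [h2, forgottenIndex]
  ring_nf

lemma abs_le_sqrt_sum {m : Type*} [Fintype m] (ρ : m → ℝ) (i : m) :
    |ρ i| ≤ Real.sqrt (∑ j, ρ j ^ 2) := by
  rw [← Real.sqrt_sq_eq_abs]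
  apply Real.sqrt_le_sqrt
  exact Finset.single_le_sum (fun j _ => sq_nonneg (ρ j)) (Finset.mem_univ i)

lemma pow_sum_le {m : Type*} [Fintype m] (ρ : m → ℝ) (k : ℕ) (hk : 2 ≤ k) :
    ∑ i, ρ i ^ k ≤ Real.sqrt (∑ j, ρ j ^ 2) ^ k := by
  set t := Real.sqrt (∑ j, ρ j ^ 2) with ht
  have ht0 : 0 ≤ t := Real.sqrt_nonneg _
  have ht2 : t ^ 2 = ∑ j, ρ j ^ 2 :=
    Real.sq_sqrt (Finset.sum_nonneg fun j _ => sq_nonneg (ρ j))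
  calc ∑ i, ρ i ^ k ≤ ∑ i, ρ i ^ 2 * t ^ (k - 2) := by
        refine Finset.sum_le_sum fun i _ => ?_
        calc ρ i ^ k ≤ |ρ i ^ k| := le_abs_self _
          _ = |ρ i| ^ k := by rw [abs_pow]
          _ = |ρ i| ^ 2 * |ρ i| ^ (k - 2) := by rw [← pow_add]; congr 1; omega
          _ ≤ |ρ i| ^ 2 * t ^ (k - 2) := by
              apply mul_le_mul_of_nonneg_left _ (by positivity)
              exact pow_le_pow_left₀ (abs_nonneg _) (abs_le_sqrt_sum ρ i) _
          _ = ρ i ^ 2 * t ^ (k - 2) := by rw [sq_abs]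
    _ = t ^ 2 * t ^ (k - 2) := by rw [← Finset.sum_mul, ht2]
    _ = t ^ k := by rw [← pow_add]; congr 1; omega

lemma pow_sum_lt_six {m : Type*} [Fintype m] (ρ : m → ℝ) (p q : m) (hpq : p ≠ q)
    (hp : ρ p ≠ 0) (hq : ρ q ≠ 0) :
    ∑ i, ρ i ^ 6 < Real.sqrt (∑ j, ρ j ^ 2) ^ 6 := by
  set t := Real.sqrt (∑ j, ρ j ^ 2) with ht
  have ht2 : t ^ 2 = ∑ j, ρ j ^ 2 :=
    Real.sq_sqrt (Finset.sum_nonneg fun j _ => sq_nonneg (ρ j))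
  have hplt : ρ p ^ 2 < t ^ 2 := by
    rw [ht2]
    have h1 : ρ p ^ 2 + ρ q ^ 2 ≤ ∑ j, ρ j ^ 2 := by
      have hpair : ∑ j ∈ ({p, q} : Finset m), ρ j ^ 2 = ρ p ^ 2 + ρ q ^ 2 :=
        Finset.sum_pair hpq
      rw [← hpair]
      exact Finset.sum_le_sum_of_subset_of_nonneg (Finset.subset_univ _)
        (fun j _ _ => sq_nonneg (ρ j))
    have : 0 < ρ q ^ 2 := by positivity
    linarith
  have key : ∀ i, ρ i ^ 6 ≤ ρ i ^ 2 * t ^ 4 := by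
    intro i
    have h := abs_le_sqrt_sum ρ i
    calc ρ i ^ 6 ≤ |ρ i| ^ 6 := by rw [← abs_pow]; exact le_abs_self _
      _ = |ρ i| ^ 2 * |ρ i| ^ 4 := by ring
      _ ≤ |ρ i| ^ 2 * t ^ 4 := by
          apply mul_le_mul_of_nonneg_left _ (by positivity)
          exact pow_le_pow_left₀ (abs_nonneg _) h _
      _ = ρ i ^ 2 * t ^ 4 := by rw [sq_abs]
  have keyp : ρ p ^ 6 < ρ p ^ 2 * t ^ 4 := by
    have h4 : ρ p ^ 4 < t ^ 4 := by nlinarith [sq_nonneg (ρ p), sq_nonneg t]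
    calc ρ p ^ 6 = ρ p ^ 2 * ρ p ^ 4 := by ring
      _ < ρ p ^ 2 * t ^ 4 := by
          apply mul_lt_mul_of_pos_left h4 (by positivity)
  calc ∑ i, ρ i ^ 6 < ∑ i, ρ i ^ 2 * t ^ 4 :=
        Finset.sum_lt_sum (fun i _ => key i) ⟨p, Finset.mem_univ p, keyp⟩
    _ = t ^ 2 * t ^ 4 := by rw [← Finset.sum_mul, ht2]
    _ = t ^ 6 := by ring

theorem stmt17 {n : ℕ} (G : SimpleGraph (Fin n)) :
    somborEstrada G ≤ (n : ℝ) - 1 + (somborMatrix G ^ 3).trace / 6 +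
        (somborMatrix G ^ 4).trace / 24 + Real.exp (Real.sqrt (2 * forgottenIndex G)) -
        Real.sqrt (2 * forgottenIndex G) -
        (1 / 3) * forgottenIndex G * Real.sqrt (2 * forgottenIndex G) -
        (1 / 6) * (forgottenIndex G) ^ 2 ∧
    (somborEstrada G = (n : ℝ) - 1 + (somborMatrix G ^ 3).trace / 6 +
        (somborMatrix G ^ 4).trace / 24 + Real.exp (Real.sqrt (2 * forgottenIndex G)) -
        Real.sqrt (2 * forgottenIndex G) -
        (1 / 3) * forgottenIndex G * Real.sqrt (2 * forgottenIndex G) -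
        (1 / 6) * (forgottenIndex G) ^ 2 ↔ G = ⊥) := by
  classical
  have hF0 : 0 ≤ forgottenIndex G := Finset.sum_nonneg fun i _ => by positivity
  set ρ : Fin n → ℝ := somborEigs G with hρdef
  set Fi : ℝ := forgottenIndex G with hFidef
  set t : ℝ := Real.sqrt (2 * Fi) with htdef
  have ht0 : 0 ≤ t := Real.sqrt_nonneg _
  have ht2 : t ^ 2 = 2 * Fi := Real.sq_sqrt (by linarith)
  have htr : ∀ k, ((somborMatrix G) ^ k).trace = ∑ i, ρ i ^ k := fun k =>
    trace_pow_eq_sum _ (somborMatrix_isHermitian G) k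
  have h1 : ∑ i, ρ i = 0 := by
    have h := htr 1
    rw [pow_one, sombor_trace_zero] at h
    simpa using h.symm
  have h2 : ∑ i, ρ i ^ 2 = 2 * Fi := by
    have h := htr 2
    rw [sombor_trace_sq] at h
    exact h.symm
  have hsqeq : Real.sqrt (∑ j, ρ j ^ 2) = t := by rw [h2]
  set P : ℕ → ℝ := fun k => (∑ i, ρ i ^ k) / k.factorial with hPdef
  set T : ℕ → ℝ := fun k => t ^ k / k.factorial with hTdef
  have hPsum : Summable P := by
    have hiP : P = fun k => ∑ i, ρ i ^ k / k.factorial := by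
      funext k
      simp only [hPdef]
      rw [Finset.sum_div]
    rw [hiP]
    exact summable_sum fun i _ => Real.summable_pow_div_factorial (ρ i)
  have hTsum : Summable T := Real.summable_pow_div_factorial t
  have hEE : somborEstrada G = ∑' k, P k := by
    rw [somborEstrada]
    have : ∀ i : Fin n, Real.exp (somborEigs G i) = ∑' k : ℕ, ρ i ^ k / k.factorial := by
      intro i
      rw [← hρdef]  -- no-op maybe
      exact my_exp_tsum (ρ i)
    rw [Finset.sum_congr rfl fun i _ => this i]
    rw [← Summable.tsum_finsetSum fun i _ => Real.summable_pow_div_factorial (ρ i)]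
    congr 1
    funext k
    simp only [hPdef]
    rw [Finset.sum_div]
  have hET : Real.exp t = ∑' k, T k := my_exp_tsum t
  have hEE5 : somborEstrada G = (∑ k ∈ Finset.range 5, P k) + ∑' k, P (k + 5) := by
    rw [hEE, ← Summable.sum_add_tsum_nat_add 5 hPsum]
  have hET5 : Real.exp t = (∑ k ∈ Finset.range 5, T k) + ∑' k, T (k + 5) := by
    rw [hET, ← Summable.sum_add_tsum_nat_add 5 hTsum]
  have hheadP : ∑ k ∈ Finset.range 5, P k
      = (n : ℝ) + Fi + (somborMatrix G ^ 3).trace / 6 + (somborMatrix G ^ 4).trace / 24 := by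
    rw [Finset.sum_range_succ, Finset.sum_range_succ, Finset.sum_range_succ,
      Finset.sum_range_succ, Finset.sum_range_one]
    have e0 : P 0 = (n : ℝ) := by
      simp [hPdef]
    have e1 : P 1 = 0 := by
      simp [hPdef, h1]
    have e2 : P 2 = Fi := by
      simp only [hPdef, h2]
      norm_num [Nat.factorial]
    have e3 : P 3 = (somborMatrix G ^ 3).trace / 6 := by
      simp only [hPdef]
      rw [← htr 3]
      norm_num [Nat.factorial]
    have e4 : P 4 = (somborMatrix G ^ 4).trace / 24 := by
      simp only [hPdef]
      rw [← htr 4]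
      norm_num [Nat.factorial]
    rw [e0, e1, e2, e3, e4]
    ring
  have hheadT : ∑ k ∈ Finset.range 5, T k
      = 1 + t + Fi + (1 / 3) * Fi * t + (1 / 6) * Fi ^ 2 := by
    rw [Finset.sum_range_succ, Finset.sum_range_succ, Finset.sum_range_succ,
      Finset.sum_range_succ, Finset.sum_range_one]
    have e0 : T 0 = 1 := by simp [hTdef]
    have e1 : T 1 = t := by simp [hTdef]
    have e2 : T 2 = Fi := by
      simp only [hTdef, ht2]
      norm_num [Nat.factorial]
    have e3 : T 3 = (1 / 3) * Fi * t := by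
      simp only [hTdef]
      have h3 : t ^ 3 = t ^ 2 * t := by ring
      rw [h3, ht2]
      norm_num [Nat.factorial]
      ring
    have e4 : T 4 = (1 / 6) * Fi ^ 2 := by
      simp only [hTdef]
      have h4 : t ^ 4 = (t ^ 2) ^ 2 := by ring
      rw [h4, ht2]
      norm_num [Nat.factorial]
      ring
    rw [e0, e1, e2, e3, e4]
  have hterm : ∀ k : ℕ, P (k + 5) ≤ T (k + 5) := by
    intro k
    simp only [hPdef, hTdef]
    have hnum : ∑ i, ρ i ^ (k + 5) ≤ t ^ (k + 5) := by
      have := pow_sum_le ρ (k + 5) (by omega)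
      rwa [hsqeq] at this
    have hfac : (0 : ℝ) < ((k + 5).factorial : ℝ) := by
      exact_mod_cast (k + 5).factorial_pos
    exact div_le_div_of_nonneg_right hnum hfac.le
  have htail : ∑' k, P (k + 5) ≤ ∑' k, T (k + 5) :=
    Summable.tsum_le_tsum hterm ((summable_nat_add_iff 5).mpr hPsum) ((summable_nat_add_iff 5).mpr hTsum)
  have hRHSeq : (n : ℝ) - 1 + (somborMatrix G ^ 3).trace / 6 +
        (somborMatrix G ^ 4).trace / 24 + Real.exp t - t - (1 / 3) * Fi * t - (1 / 6) * Fi ^ 2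
      = (n : ℝ) + Fi + (somborMatrix G ^ 3).trace / 6 + (somborMatrix G ^ 4).trace / 24
        + ∑' k, T (k + 5) := by
    rw [hET5, hheadT]
    ring
  have hEEeq : somborEstrada G
      = (n : ℝ) + Fi + (somborMatrix G ^ 3).trace / 6 + (somborMatrix G ^ 4).trace / 24
        + ∑' k, P (k + 5) := by
    rw [hEE5, hheadP]
  refine ⟨by rw [hEEeq, hRHSeq.symm] at *; linarith [htail], ?_, ?_⟩
  · -- equality → G = ⊥
    intro heq
    by_contra hG
    have hedge : ∃ a b, G.Adj a b := by
      by_contra hno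
      push_neg at hno
      exact hG (by ext a b; simp only [SimpleGraph.bot_adj, iff_false]; exact hno a b)
    obtain ⟨a, b, hab⟩ := hedge
    have hda : 0 < G.degree a := by
      rw [SimpleGraph.degree_pos_iff_exists_adj]
      exact ⟨b, hab⟩
    have hFpos : 0 < Fi := by
      rw [hFidef, forgottenIndex]
      refine Finset.sum_pos' (fun i _ => by positivity) ⟨a, Finset.mem_univ a, ?_⟩
      have : (0 : ℝ) < (G.degree a : ℝ) := by exact_mod_cast hda
      positivity
    have hsumsq : 0 < ∑ i, ρ i ^ 2 := by rw [h2]; linarith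
    have hpne : ∃ p, ρ p ≠ 0 := by
      by_contra hall
      push_neg at hall
      rw [Finset.sum_eq_zero (fun i _ => by rw [hall i]; ring)] at hsumsq
      exact lt_irrefl 0 hsumsq
    obtain ⟨p, hp⟩ := hpne
    have hqne : ∃ q, q ≠ p ∧ ρ q ≠ 0 := by
      by_contra hall
      push_neg at hall
      have : ∑ i, ρ i = ρ p := by
        refine Finset.sum_eq_single p (fun q _ hqp => hall q hqp) (fun h => absurd (Finset.mem_univ p) h)
      rw [h1] at this
      exact hp this.symm
    obtain ⟨q, hqp, hq⟩ := hqne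
    have h6 : P (1 + 5) < T (1 + 5) := by
      simp only [hPdef, hTdef]
      have hnum : ∑ i, ρ i ^ 6 < t ^ 6 := by
        have := pow_sum_lt_six ρ p q (fun h => hqp h.symm) hp hq
        rwa [hsqeq] at this
      have hfac : (0 : ℝ) < ((1 + 5).factorial : ℝ) := by norm_num [Nat.factorial]
      exact div_lt_div_of_pos_right hnum hfac
    have hstrict : ∑' k, P (k + 5) < ∑' k, T (k + 5) :=
      Summable.tsum_lt_tsum (fun k => hterm k) h6 ((summable_nat_add_iff 5).mpr hPsum)
        ((summable_nat_add_iff 5).mpr hTsum)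
    rw [hEEeq, hRHSeq.symm] at *
    linarith [hstrict]
  · -- G = ⊥ → equality
    intro hG
    subst hG
    have hFi0 : Fi = 0 := by
      rw [hFidef, forgottenIndex]
      refine Finset.sum_eq_zero fun i _ => ?_
      have hd : ∀ (inst : Fintype ((⊥ : SimpleGraph (Fin n)).neighborSet i)),
          @SimpleGraph.degree (Fin n) ⊥ i inst = 0 := by
        intro inst
        rw [SimpleGraph.degree, Finset.card_eq_zero]
        ext w
        simp [SimpleGraph.mem_neighborFinset]
      rw [hd _]
      norm_num
    have hρ0 : ∀ i, ρ i = 0 := by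
      intro i
      have hz : ∑ i, ρ i ^ 2 = 0 := by rw [h2, hFi0]; ring
      have := (Finset.sum_eq_zero_iff_of_nonneg (fun j _ => sq_nonneg (ρ j))).mp hz i
        (Finset.mem_univ i)
      exact pow_eq_zero_iff (by norm_num) |>.mp this
    have hPz : ∀ k : ℕ, P (k + 5) = 0 := by
      intro k
      simp only [hPdef]
      rw [Finset.sum_eq_zero (fun i _ => by rw [hρ0 i]; exact zero_pow (by omega))]
      simp
    have hTz : ∀ k : ℕ, T (k + 5) = 0 := by
      intro k
      have htz : t = 0 := by rw [htdef, hFi0]; simp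
      simp only [hTdef]
      rw [htz, zero_pow (by omega)]
      simp
    have : ∑' k, P (k + 5) = ∑' k, T (k + 5) := by
      rw [tsum_congr hPz, tsum_congr hTz]
    rw [hEEeq, hRHSeq.symm] at *
    linarith [this]
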